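/- Let λ : G → End₀(A) be an ideal partial representation and (π, M) a covariant representation of λ. Then: (a) for each g ∈ G, the image π_g(M) is an A-submodule of M (i.e. x·π_g(m) ∈ π_g(M) for all x ∈ A, m ∈ M); and (b) λ_g(A)·M ⊆ π_g(M), i.e. λ_g(x)·m ∈ π_g(M) for all x ∈ A, m ∈ M. -/
import Mathlib

/-- For an ideal partial representation `l = λ` on an algebra `A` and a
covariant representation `(π, M)` of `λ`:
(a) each `π_g(M)` is an `A`-submodule of `M`, and
(b) `λ_g(A)·M ⊆ π_g(M)`. -/
theorem stmt17 {K G A M : Type*} [CommRing K] [Group G]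
    [NonUnitalRing A] [Module K A] [AddCommGroup M] [Module K M]
    (σ : A →ₗ[K] M →ₗ[K] M)
    (hσ : ∀ (x y : A) (m : M), σ (x * y) m = σ x (σ y m))
    (l : G → A →ₗ[K] A)
    (hlmul : ∀ (g : G) (x y : A), l g (x * y) = l g x * l g y)
    (hl1 : ∀ x : A, l 1 x = x)
    (hl2 : ∀ (g h : G) (x : A), l g⁻¹ (l g (l h x)) = l g⁻¹ (l (g * h) x))
    (hl3 : ∀ (g h : G) (x : A), l g (l h (l h⁻¹ x)) = l (g * h) (l h⁻¹ x))
    (hlideal : ∀ (g : G) (x y : A),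
      x * l g y ∈ LinearMap.range (l g) ∧ l g y * x ∈ LinearMap.range (l g))
    (π : G → M →ₗ[K] M)
    (hπ1 : ∀ m : M, π 1 m = m)
    (hπ2 : ∀ (g h : G) (m : M), π g⁻¹ (π g (π h m)) = π g⁻¹ (π (g * h) m))
    (hπ3 : ∀ (g h : G) (m : M), π g (π h (π h⁻¹ m)) = π (g * h) (π h⁻¹ m))
    -- covariance: π_g(x·m) = λ_g(x)·π_g(m)
    (hcov : ∀ (g : G) (x : A) (m : M), π g (σ x m) = σ (l g x) (π g m))
    -- ε_g(x·m) = e_g(x)·m = x·ε_g(m), with ε_g = π_g π_{g⁻¹}, e_g = λ_g λ_{g⁻¹}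
    (heps1 : ∀ (g : G) (x : A) (m : M),
      π g (π g⁻¹ (σ x m)) = σ (l g (l g⁻¹ x)) m)
    (heps2 : ∀ (g : G) (x : A) (m : M),
      π g (π g⁻¹ (σ x m)) = σ x (π g (π g⁻¹ m))) :
    (∀ (g : G) (x : A) (m : M), σ x (π g m) ∈ LinearMap.range (π g)) ∧
    (∀ (g : G) (x : A) (m : M), σ (l g x) m ∈ LinearMap.range (π g)) := by
  constructor
  · intro g x m
    have hπgg : π g (π g⁻¹ (π g m)) = π g m := by
      have := hπ3 g g⁻¹ m
      simpa [hπ1] using this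
    have : σ x (π g m) = π g (π g⁻¹ (σ x (π g m))) := by
      rw [heps2 g x (π g m), hπgg]
    rw [this]
    exact ⟨π g⁻¹ (σ x (π g m)), rfl⟩
  · intro g x m
    have hlgg : l g (l g⁻¹ (l g x)) = l g x := by
      have := hl3 g g⁻¹ x
      simpa [hl1] using this
    have : σ (l g x) m = π g (π g⁻¹ (σ (l g x) m)) := by
      rw [heps1 g (l g x) m, hlgg]
    rw [this]
    exact ⟨π g⁻¹ (σ (l g x) m), rfl⟩
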